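/- Let $\Lambda : S^1 \to \mathbb{N}$ be a function on the unit circle which is continuous except at finitely many points, bounded, and nonnegative. Define $i_n := \sum_{z \in S^1, z^n = 1} \Lambda(z)$. Then $\lim_{n \to \infty} i_n / n = \frac{1}{2\pi} \int_{S^1} \Lambda(z)\, dz$ (the average of $\Lambda$ over the circle with respect to normalized Haar measure). -/

import Mathlib

open MeasureTheory

instance : Fact (0 < 2 * Real.pi) := ⟨by positivity⟩


theorem lemA (f : AddCircle (2*Real.pi) → ℝ) (hf : Continuous f) :
    Filter.Tendsto (fun n : ℕ => (∑ k ∈ Finset.range n,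
      f ((((k : ℝ) * (2*Real.pi) / n : ℝ)) : AddCircle (2*Real.pi))) / n) Filter.atTop
      (nhds ((1/(2*Real.pi)) * ∫ z, f z)) := by
  have hT : (0:ℝ) < 2*Real.pi := by positivity
  have hg : Continuous (fun x : ℝ => f x) := hf.comp continuous_quotient_mk'
  rw [Metric.tendsto_atTop]
  intro ε hε
  obtain ⟨δ, hδ, hδ2⟩ := Metric.uniformContinuous_iff.mp
    (CompactSpace.uniformContinuous_of_continuous hf) (ε/2) (by positivity)
  obtain ⟨N₀, hN₀⟩ := exists_nat_gt (2*Real.pi/δ)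
  refine ⟨max N₀ 1, fun n hn => ?_⟩
  have hn1 : 1 ≤ n := le_trans (le_max_right _ _) hn
  have hnR : (0:ℝ) < n := by exact_mod_cast hn1
  set g : ℝ → ℝ := fun x => f x with hgdef
  set h : ℝ := 2*Real.pi/n with hh
  have hhpos : 0 < h := by positivity
  have hhδ : h < δ := by
    have h1 : (N₀:ℝ) ≤ n := by exact_mod_cast le_trans (le_max_left _ _) hn
    have h2 : 2*Real.pi/δ < n := lt_of_lt_of_le hN₀ h1
    rw [hh, div_lt_iff₀ hnR]
    rw [div_lt_iff₀ hδ] at h2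
    linarith
  set a : ℕ → ℝ := fun k => k * h with ha
  have hint : ∀ k, IntervalIntegrable g volume (a k) (a (k+1)) :=
    fun k => hg.intervalIntegrable _ _
  have hstep : ∀ k : ℕ, a (k+1) = a k + h := by
    intro k; simp only [ha]; push_cast; ring
  -- each interval integral
  set D : ℕ → ℝ := fun k => ∫ x in (a k)..(a (k+1)), (g (a k) - g x) with hD
  have hdiff : ∀ k : ℕ, a (k+1) - a k = h := by
    intro k; rw [hstep k]; ring
  have hIk : ∀ k : ℕ, (∫ x in (a k)..(a (k+1)), g x) = h * g (a k) - D k := by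
    intro k
    have h1 : D k = (a (k+1) - a k) * g (a k) - ∫ x in (a k)..(a (k+1)), g x := by
      simp only [hD]
      rw [intervalIntegral.integral_sub (intervalIntegrable_const) (hint k),
        intervalIntegral.integral_const, smul_eq_mul]
    rw [h1, hdiff k]; ring
  have key1 : (∫ z, f z) = h * (∑ k ∈ Finset.range n, g (a k)) - ∑ k ∈ Finset.range n, D k := by
    rw [← AddCircle.intervalIntegral_preimage (2*Real.pi) 0 f]
    have h2 : (0:ℝ) + 2*Real.pi = a n := by
      simp only [ha, hh]; field_simp; ring
    rw [h2]
    have h3 : a 0 = 0 := by simp [ha]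
    rw [← h3, ← intervalIntegral.sum_integral_adjacent_intervals (fun k _ => hint k)]
    rw [Finset.mul_sum, ← Finset.sum_sub_distrib]
    exact Finset.sum_congr rfl (fun k _ => hIk k)
  -- bound on D k
  have hDb : ∀ k : ℕ, |D k| ≤ ε/2 * h := by
    intro k
    have := intervalIntegral.norm_integral_le_of_norm_le_const (C := ε/2)
      (f := fun x => g (a k) - g x) (a := a k) (b := a (k+1)) ?_
    · rw [hdiff k, abs_of_pos hhpos] at this
      simpa [hD, Real.norm_eq_abs] using this
    · intro x hx
      rw [Set.uIoc_of_le (by rw [hstep k]; linarith)] at hx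
      rw [hstep k] at hx
      have hdist : dist ((a k : ℝ) : AddCircle (2*Real.pi)) ((x : ℝ) : AddCircle (2*Real.pi)) < δ := by
        have : dist ((a k : ℝ) : AddCircle (2*Real.pi)) ((x : ℝ) : AddCircle (2*Real.pi))
            ≤ |a k - x| := by
          rw [dist_eq_norm]
          have : ((a k : ℝ) : AddCircle (2*Real.pi)) - ((x:ℝ) : AddCircle (2*Real.pi))
              = ((a k - x : ℝ) : AddCircle (2*Real.pi)) := (QuotientAddGroup.mk_sub _ _ _).symm
          rw [this]
          simpa using QuotientAddGroup.norm_mk_le_norm (S := AddSubgroup.zmultiples (2*Real.pi)) (m := a k - x)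
        refine lt_of_le_of_lt this ?_
        rw [abs_sub_comm, abs_of_pos (by linarith [hx.1])]
        linarith [hx.1, hx.2, hhδ]
      have := hδ2 hdist
      rw [Real.dist_eq] at this
      exact le_of_lt this
  -- assemble
  have hsum : (∑ k ∈ Finset.range n,
      f ((((k : ℝ) * (2*Real.pi) / n : ℝ)) : AddCircle (2*Real.pi)))
      = ∑ k ∈ Finset.range n, g (a k) := by
    refine Finset.sum_congr rfl (fun k _ => ?_)
    simp only [hgdef, ha, hh]
    norm_num [mul_div_assoc]
  rw [Real.dist_eq, hsum, key1]
  have hid : (∑ k ∈ Finset.range n, g (a k)) / n -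
      1 / (2*Real.pi) * (h * (∑ k ∈ Finset.range n, g (a k)) - ∑ k ∈ Finset.range n, D k)
      = 1/(2*Real.pi) * ∑ k ∈ Finset.range n, D k := by
    rw [hh]; field_simp; ring
  rw [hid]
  have hb : |∑ k ∈ Finset.range n, D k| ≤ n * (ε/2 * h) := by
    refine le_trans (Finset.abs_sum_le_sum_abs _ _) ?_
    calc ∑ k ∈ Finset.range n, |D k| ≤ ∑ k ∈ Finset.range n, (ε/2*h) :=
          Finset.sum_le_sum (fun k _ => hDb k)
      _ = n * (ε/2*h) := by rw [Finset.sum_const, Finset.card_range]; ring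
  have : |1/(2*Real.pi) * ∑ k ∈ Finset.range n, D k| ≤ ε/2 := by
    rw [abs_mul, abs_of_pos (by positivity : (0:ℝ) < 1/(2*Real.pi))]
    have h4 : (n:ℝ) * (ε/2*h) = ε/2 * (2*Real.pi) := by rw [hh]; field_simp
    rw [h4] at hb
    calc 1/(2*Real.pi) * |∑ k ∈ Finset.range n, D k| ≤ 1/(2*Real.pi) * (ε/2*(2*Real.pi)) := by
          apply mul_le_mul_of_nonneg_left hb (by positivity)
      _ = ε/2 := by field_simp
  linarith [this, abs_nonneg (1/(2*Real.pi) * ∑ k ∈ Finset.range n, D k)]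


theorem vol_singleton (z : AddCircle (2*Real.pi)) :
    volume ({z} : Set (AddCircle (2*Real.pi))) = 0 := by
  have h := (AddCircle.measurePreserving_mk (2*Real.pi) 0).measure_preimage
    (measurableSet_singleton z).nullMeasurableSet
  rw [← h, Measure.restrict_apply' measurableSet_Ioc]
  refine measure_mono_null Set.inter_subset_left (Set.Countable.measure_zero ?_ _)
  obtain ⟨x, rfl⟩ := QuotientAddGroup.mk_surjective z
  have h2 : (((↑) : ℝ → AddCircle (2*Real.pi)) ⁻¹' {QuotientAddGroup.mk x} : Set ℝ)
      = Set.range (fun m : ℤ => x + m • (2*Real.pi)) := by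
    ext y
    simp only [Set.mem_preimage, Set.mem_singleton_iff, Set.mem_range]
    constructor
    · intro hy
      have hy2 : y - x ∈ AddSubgroup.zmultiples (2*Real.pi) := by
        rwa [← QuotientAddGroup.eq_iff_sub_mem]
      obtain ⟨m, hm⟩ := hy2
      refine ⟨m, ?_⟩
      simp only [zsmul_eq_mul] at hm ⊢
      linarith [hm]
    · rintro ⟨m, rfl⟩
      have h3 : (x + m • (2*Real.pi)) - x ∈ AddSubgroup.zmultiples (2*Real.pi) := by
        simpa using AddSubgroup.zsmul_mem_zmultiples (2*Real.pi) m
      rwa [← QuotientAddGroup.eq_iff_sub_mem] at h3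
  rw [h2]
  exact Set.countable_range _

theorem lemUp (E : Set (AddCircle (2*Real.pi))) {ε : ℝ} (hε : 0 < ε) :
    ∀ᶠ n : ℕ in Filter.atTop,
      (∑ k ∈ Finset.range n, Set.indicator E (fun _ => (1:ℝ))
          ((((k : ℝ) * (2*Real.pi) / n : ℝ)) : AddCircle (2*Real.pi)))/n
        < 1/(2*Real.pi) * (volume (closure E)).toReal + ε := by
  have hT : (0:ℝ) < 2*Real.pi := by positivity
  rcases E.eq_empty_or_nonempty with rfl | hne
  · refine Filter.Eventually.of_forall (fun n => ?_)
    simp only [Set.indicator_empty, Pi.zero_apply, Finset.sum_const_zero, zero_div]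
    positivity
  set F := closure E with hF
  have hFc : IsClosed F := isClosed_closure
  have hFne : F.Nonempty := hne.closure
  set g : ℕ → AddCircle (2*Real.pi) → ℝ :=
    fun m x => max 0 (1 - Metric.infDist x F * (m+1)) with hgdef
  have hgc : ∀ m, Continuous (g m) := fun m =>
    continuous_const.max (continuous_const.sub
      ((Metric.continuous_infDist_pt F).mul continuous_const))
  have hg0 : ∀ m x, 0 ≤ g m x := fun m x => le_max_left _ _
  have hg1 : ∀ m x, g m x ≤ 1 := by
    intro m x
    apply max_le (by norm_num)
    have : 0 ≤ Metric.infDist x F * (m+1) :=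
      mul_nonneg Metric.infDist_nonneg (by positivity)
    linarith
  have hgind : ∀ m x, Set.indicator E (fun _ => (1:ℝ)) x ≤ g m x := by
    intro m x
    by_cases hx : x ∈ E
    · rw [Set.indicator_of_mem hx]
      have h0 : Metric.infDist x F = 0 := Metric.infDist_zero_of_mem (subset_closure hx)
      simp [hgdef, h0]
    · rw [Set.indicator_of_notMem hx]; exact hg0 m x
  have hglim : ∀ x, Filter.Tendsto (fun m => g m x) Filter.atTop
      (nhds (Set.indicator F (fun _ => (1:ℝ)) x)) := by
    intro x
    by_cases hx : x ∈ F
    · have h1 : ∀ m, g m x = 1 := by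
        intro m; simp [hgdef, Metric.infDist_zero_of_mem hx]
      rw [Set.indicator_of_mem hx]
      simpa [h1] using (tendsto_const_nhds : Filter.Tendsto (fun _ : ℕ => (1:ℝ)) _ _)
    · rw [Set.indicator_of_notMem hx]
      have hpos : 0 < Metric.infDist x F :=
        (hFc.notMem_iff_infDist_pos hFne).mp hx
      obtain ⟨M, hM⟩ := exists_nat_ge (1 / Metric.infDist x F)
      have hz : ∀ m ≥ M, g m x = 0 := by
        intro m hm
        have h2 : (1:ℝ) ≤ Metric.infDist x F * (m+1) := by
          rw [div_le_iff₀ hpos] at hM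
          have h3 : (M:ℝ) ≤ (m:ℝ) + 1 := by
            have : (M:ℝ) ≤ m := by exact_mod_cast hm
            linarith
          nlinarith
        exact max_eq_left (by linarith)
      exact Filter.Tendsto.congr'
        (Filter.eventually_atTop.2 ⟨M, fun m hm => (hz m hm).symm⟩) tendsto_const_nhds
  have hitend : Filter.Tendsto (fun m => ∫ x, g m x) Filter.atTop
      (nhds ((volume F).toReal)) := by
    have h := MeasureTheory.tendsto_integral_of_dominated_convergence (bound := fun _ => (1:ℝ))
      (F := g) (f := Set.indicator F (fun _ => (1:ℝ)))
      (μ := volume) (fun m => (hgc m).aestronglyMeasurable)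
      (integrable_const 1)
      (fun m => Filter.Eventually.of_forall (fun x => by
        rw [Real.norm_eq_abs, abs_of_nonneg (hg0 m x)]; exact hg1 m x))
      (Filter.Eventually.of_forall hglim)
    rwa [MeasureTheory.integral_indicator_const (1:ℝ) hFc.measurableSet, smul_eq_mul,
      mul_one] at h
  obtain ⟨M, hM⟩ := Metric.tendsto_atTop.mp hitend (ε*Real.pi) (by positivity)
  have hMint : ∫ x, g M x < (volume F).toReal + ε*Real.pi := by
    have := hM M le_rfl
    rw [Real.dist_eq] at this
    have := abs_lt.mp this
    linarith [this.2]
  have hlemA := Metric.tendsto_atTop.mp (lemA (g M) (hgc M)) (ε/2) (by positivity)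
  obtain ⟨N, hN⟩ := hlemA
  refine Filter.eventually_atTop.2 ⟨N, fun n hn => ?_⟩
  have h5 := hN n hn
  rw [Real.dist_eq] at h5
  have h5 := (abs_lt.mp h5).2
  have h6 : (∑ k ∈ Finset.range n, Set.indicator E (fun _ => (1:ℝ))
          ((((k : ℝ) * (2*Real.pi) / n : ℝ)) : AddCircle (2*Real.pi)))/n
      ≤ (∑ k ∈ Finset.range n, g M
          ((((k : ℝ) * (2*Real.pi) / n : ℝ)) : AddCircle (2*Real.pi)))/n := by
    gcongr <;> first | exact Nat.cast_nonneg n | exact hgind M _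
  have h7 : 1/(2*Real.pi) * ∫ x, g M x < 1/(2*Real.pi) * (volume F).toReal + ε/2 := by
    have := mul_lt_mul_of_pos_left hMint (by positivity : (0:ℝ) < 1/(2*Real.pi))
    have heq : 1/(2*Real.pi) * ((volume F).toReal + ε*Real.pi)
        = 1/(2*Real.pi) * (volume F).toReal + ε/2 := by
      field_simp
    linarith [heq ▸ this]
  linarith

theorem lemB (E : Set (AddCircle (2*Real.pi))) (hE : MeasurableSet E)
    (hfr : volume (frontier E) = 0) :
    Filter.Tendsto (fun n : ℕ => (∑ k ∈ Finset.range n, Set.indicator E (fun _ => (1:ℝ))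
        ((((k : ℝ) * (2*Real.pi) / n : ℝ)) : AddCircle (2*Real.pi)))/n) Filter.atTop
      (nhds (1/(2*Real.pi) * (volume E).toReal)) := by
  have hT : (0:ℝ) < 2*Real.pi := by positivity
  have hclosure : ∀ A : Set (AddCircle (2*Real.pi)), volume (frontier A) = 0 →
      volume (closure A) = volume A := by
    intro A hA
    apply le_antisymm
    · calc volume (closure A) ≤ volume (A ∪ frontier A) := by
            apply measure_mono
            intro x hx
            by_cases hxA : x ∈ A
            · exact Or.inl hxA
            · exact Or.inr ⟨hx, fun h => hxA (interior_subset h)⟩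
      _ ≤ volume A + volume (frontier A) := measure_union_le _ _
      _ = volume A := by rw [hA, add_zero]
    · exact measure_mono subset_closure
  have hclE : volume (closure E) = volume E := hclosure E hfr
  have hclEc : volume (closure Eᶜ) = volume Eᶜ := by
    apply hclosure
    rw [frontier_compl]; exact hfr
  have hsum : (volume E).toReal + (volume Eᶜ).toReal = 2*Real.pi := by
    rw [← ENNReal.toReal_add (measure_ne_top _ _) (measure_ne_top _ _),
      measure_add_measure_compl hE, AddCircle.measure_univ, ENNReal.toReal_ofReal hT.le]
  rw [tendsto_order]
  constructor
  · intro b hb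
    set L := 1/(2*Real.pi) * (volume E).toReal with hL
    have hεvpos : 0 < L - b := by linarith
    filter_upwards [lemUp Eᶜ hεvpos, Filter.eventually_ge_atTop 1] with n hn hn1
    have hnR : (0:ℝ) < n := by exact_mod_cast hn1
    have hid : (∑ k ∈ Finset.range n, Set.indicator E (fun _ => (1:ℝ))
          ((((k : ℝ) * (2*Real.pi) / n : ℝ)) : AddCircle (2*Real.pi))) +
        (∑ k ∈ Finset.range n, Set.indicator Eᶜ (fun _ => (1:ℝ))
          ((((k : ℝ) * (2*Real.pi) / n : ℝ)) : AddCircle (2*Real.pi))) = n := by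
      rw [← Finset.sum_add_distrib]
      have hone : ∀ y : AddCircle (2*Real.pi),
          Set.indicator E (fun _ => (1:ℝ)) y + Set.indicator Eᶜ (fun _ => (1:ℝ)) y = 1 := by
        intro y
        by_cases hy : y ∈ E <;> simp [Set.indicator_apply, hy]
      simp [hone]
    have hvEc : (volume (closure Eᶜ)).toReal = 2*Real.pi - (volume E).toReal := by
      rw [hclEc]; linarith
    rw [hvEc] at hn
    have hrhs : 1/(2*Real.pi) * (2*Real.pi - (volume E).toReal) + (L - b) = 1 - b := by
      rw [hL]; field_simp; ring
    rw [hrhs] at hn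
    have hEdiv : (∑ k ∈ Finset.range n, Set.indicator E (fun _ => (1:ℝ))
          ((((k : ℝ) * (2*Real.pi) / n : ℝ)) : AddCircle (2*Real.pi)))/n
        = 1 - (∑ k ∈ Finset.range n, Set.indicator Eᶜ (fun _ => (1:ℝ))
          ((((k : ℝ) * (2*Real.pi) / n : ℝ)) : AddCircle (2*Real.pi)))/n := by
      rw [eq_sub_iff_add_eq, ← add_div, hid, div_self hnR.ne']
    rw [hEdiv]
    linarith
  · intro b hb
    have hεvpos : 0 < b - 1/(2*Real.pi) * (volume E).toReal := by linarith
    filter_upwards [lemUp E hεvpos] with n hn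
    rw [hclE] at hn
    linarith

theorem stmt6 (Λ : AddCircle (2 * Real.pi) → ℕ)
    (hmeas : Measurable Λ) (C : ℕ) (hbd : ∀ z, Λ z ≤ C)
    (S : Finset (AddCircle (2 * Real.pi)))
    (hcont : ∀ z ∉ S, ContinuousAt (fun w => (Λ w : ℝ)) z) :
    Filter.Tendsto
      (fun n : ℕ =>
        (∑ k ∈ Finset.range n,
          (Λ ((((k : ℝ) * (2 * Real.pi) / n : ℝ) : AddCircle (2 * Real.pi))) : ℝ)) / n)
      Filter.atTop
      (nhds ((1 / (2 * Real.pi)) * ∫ z, (Λ z : ℝ))) := by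
  have hT : (0:ℝ) < 2*Real.pi := by positivity
  set E : ℕ → Set (AddCircle (2*Real.pi)) := fun m => {z | Λ z = m} with hEdef
  have hEmeas : ∀ m, MeasurableSet (E m) := fun m => hmeas (measurableSet_singleton m)
  have hSnull : volume (↑S : Set (AddCircle (2*Real.pi))) = 0 := by
    rw [← Set.biUnion_of_singleton (↑S : Set (AddCircle (2*Real.pi)))]
    exact (measure_biUnion_null_iff S.countable_toSet).2 (fun z _ => vol_singleton z)
  -- ℕ-valued functions close in ℝ are equal
  have hnat : ∀ a b : ℕ, |(a:ℝ) - (b:ℝ)| < 1/2 → a = b := by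
    intro a b hab
    by_contra hne
    have h1 : (1:ℤ) ≤ |(a:ℤ) - (b:ℤ)| :=
      Int.one_le_abs (sub_ne_zero.2 (by exact_mod_cast hne))
    have h2 : (1:ℝ) ≤ |(a:ℝ) - (b:ℝ)| := by exact_mod_cast h1
    linarith
  -- frontier of level sets is inside S
  have hfrsub : ∀ m : ℕ, frontier (E m) ⊆ (↑S : Set (AddCircle (2*Real.pi))) := by
    intro m z hz
    by_contra hzS
    have hc := hcont z hzS
    have hev : ∀ᶠ w in nhds z, Λ w = Λ z := by
      have h3 := Metric.tendsto_nhds.mp hc (1/2) (by norm_num)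
      filter_upwards [h3] with w hw
      rw [Real.dist_eq] at hw
      exact hnat _ _ hw
    rcases eq_or_ne (Λ z) m with hm | hm
    · have hmem : E m ∈ nhds z := by
        filter_upwards [hev] with w hw
        show Λ w = m
        rw [hw, hm]
      exact hz.2 (mem_interior_iff_mem_nhds.2 hmem)
    · have hmem : (E m)ᶜ ∈ nhds z := by
        filter_upwards [hev] with w hw
        show ¬ (Λ w = m)
        rw [hw]; exact hm
      have : z ∈ interior (E m)ᶜ := mem_interior_iff_mem_nhds.2 hmem
      rw [interior_compl] at this
      exact this hz.1
  have hfr : ∀ m, volume (frontier (E m)) = 0 :=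
    fun m => measure_mono_null (hfrsub m) hSnull
  -- pointwise decomposition
  have hdecomp : ∀ z, (Λ z : ℝ) = ∑ m ∈ Finset.range (C+1),
      (m:ℝ) * Set.indicator (E m) (fun _ => (1:ℝ)) z := by
    intro z
    rw [Finset.sum_eq_single (Λ z)]
    · rw [Set.indicator_of_mem (show z ∈ E (Λ z) from rfl), mul_one]
    · intro m _ hm
      have hz : z ∉ E m := fun h => hm (Eq.symm h)
      rw [Set.indicator_of_notMem hz, mul_zero]
    · intro h
      exact absurd (Finset.mem_range.2 (Nat.lt_succ_of_le (hbd z))) h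
  -- integral decomposition
  have hintegral : (∫ z, (Λ z : ℝ)) = ∑ m ∈ Finset.range (C+1),
      (m:ℝ) * (volume (E m)).toReal := by
    calc (∫ z, (Λ z : ℝ))
        = ∫ z, ∑ m ∈ Finset.range (C+1), (m:ℝ) * Set.indicator (E m) (fun _ => (1:ℝ)) z :=
          integral_congr_ae (Filter.Eventually.of_forall hdecomp)
      _ = ∑ m ∈ Finset.range (C+1), ∫ z, (m:ℝ) * Set.indicator (E m) (fun _ => (1:ℝ)) z :=
          integral_finset_sum _
            (fun m _ => ((integrable_const (1:ℝ)).indicator (hEmeas m)).const_mul _)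
      _ = ∑ m ∈ Finset.range (C+1), (m:ℝ) * (volume (E m)).toReal := by
          refine Finset.sum_congr rfl (fun m _ => ?_)
          rw [integral_const_mul, integral_indicator_const (1:ℝ) (hEmeas m), smul_eq_mul, mul_one, measureReal_def]
  -- tendsto of the sum
  have htend := tendsto_finset_sum (Finset.range (C+1))
    (fun m (_ : m ∈ Finset.range (C+1)) =>
      Filter.Tendsto.const_mul (m:ℝ) (lemB (E m) (hEmeas m) (hfr m)))
  have hfun : ∀ n : ℕ, (∑ m ∈ Finset.range (C+1), (m:ℝ) *
      ((∑ k ∈ Finset.range n, Set.indicator (E m) (fun _ => (1:ℝ))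
        ((((k : ℝ) * (2*Real.pi) / n : ℝ)) : AddCircle (2*Real.pi)))/n))
      = (∑ k ∈ Finset.range n,
          (Λ ((((k : ℝ) * (2 * Real.pi) / n : ℝ) : AddCircle (2 * Real.pi))) : ℝ)) / n := by
    intro n
    have h4 : (∑ k ∈ Finset.range n,
        (Λ ((((k : ℝ) * (2 * Real.pi) / n : ℝ) : AddCircle (2 * Real.pi))) : ℝ))
        = ∑ k ∈ Finset.range n, ∑ m ∈ Finset.range (C+1),
          (m:ℝ) * Set.indicator (E m) (fun _ => (1:ℝ))
            ((((k : ℝ) * (2*Real.pi) / n : ℝ)) : AddCircle (2*Real.pi)) :=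
      Finset.sum_congr rfl (fun k _ => hdecomp _)
    rw [h4, Finset.sum_comm, Finset.sum_div]
    refine Finset.sum_congr rfl (fun m _ => ?_)
    rw [← Finset.mul_sum, mul_div_assoc]
  have hlim : (∑ m ∈ Finset.range (C+1), (m:ℝ) * (1/(2*Real.pi) * (volume (E m)).toReal))
      = (1 / (2 * Real.pi)) * ∫ z, (Λ z : ℝ) := by
    rw [hintegral, Finset.mul_sum]
    refine Finset.sum_congr rfl (fun m _ => ?_)
    ring
  rw [← hlim]
  exact htend.congr hfun
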